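/- arXiv:1103.5622 — 2 statements merged into one kernel-verified Lean document; each statement's English description precedes it below -/
import Mathlib

section
/- Let Γ be a finitely generated group, H ⊴ Γ a finitely generated normal subgroup, and α an endomorphism of Γ with α(H) ⊆ H. Then GR(α) ≤ max{ GR(α restricted to H), GR(induced endomorphism on Γ/H) }, where growth rates are computed with respect to finite generating sets: a finite generating set T of H together with coset representatives g₁,…,g_k whose images generate Γ/H, with T ∪ {g₁,…,g_k} generating Γ. -/
open Filter

/-- Word length of `g` with respect to `S ∪ S⁻¹`. -/
noncomputable def wordLength {G : Type*} [Group G] (S : Set G) (g : G) : ℕ :=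
  sInf {n | ∃ l : List G, l.length = n ∧ (∀ x ∈ l, x ∈ S ∨ x⁻¹ ∈ S) ∧ l.prod = g}

namespace GRaux

variable {G : Type*} [Group G]

/-- `a` is represented by a word of length at most `n` in `S ∪ S⁻¹`. -/
def Rep (S : Set G) (n : ℕ) (a : G) : Prop :=
  ∃ l : List G, l.length ≤ n ∧ (∀ x ∈ l, x ∈ S ∨ x⁻¹ ∈ S) ∧ l.prod = a

theorem Rep.mono {S : Set G} {n m : ℕ} {a : G} (h : n ≤ m) (hr : Rep S n a) : Rep S m a := by
  obtain ⟨l, h1, h2, h3⟩ := hr; exact ⟨l, h1.trans h, h2, h3⟩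

theorem rep_one (S : Set G) (n : ℕ) : Rep S n 1 := ⟨[], by simp, by simp, rfl⟩

theorem rep_of_mem {S : Set G} {a : G} (h : a ∈ S) : Rep S 1 a :=
  ⟨[a], by simp, by simp [h], by simp⟩

theorem Rep.mul {S : Set G} {n m : ℕ} {a b : G} (ha : Rep S n a) (hb : Rep S m b) :
    Rep S (n + m) (a * b) := by
  obtain ⟨l1, h1, h2, h3⟩ := ha
  obtain ⟨l4, h4, h5, h6⟩ := hb
  refine ⟨l1 ++ l4, by simpa using Nat.add_le_add h1 h4, ?_, by simp [h3, h6]⟩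
  intro x hx
  rcases List.mem_append.1 hx with h | h
  · exact h2 x h
  · exact h5 x h

theorem Rep.inv {S : Set G} {n : ℕ} {a : G} (ha : Rep S n a) : Rep S n a⁻¹ := by
  obtain ⟨l, h1, h2, h3⟩ := ha
  refine ⟨(l.map (·⁻¹)).reverse, by simpa using h1, ?_, ?_⟩
  · intro x hx
    simp only [List.mem_reverse, List.mem_map] at hx
    obtain ⟨y, hy, rfl⟩ := hx
    rcases h2 y hy with h | h
    · exact Or.inr (by simpa using h)
    · exact Or.inl h
  · rw [List.prod_reverse_noncomm]
    simp [h3]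

theorem Rep.subset {S S' : Set G} (hss : S ⊆ S') {n : ℕ} {a : G} (ha : Rep S n a) :
    Rep S' n a := by
  obtain ⟨l, h1, h2, h3⟩ := ha
  exact ⟨l, h1, fun x hx => (h2 x hx).imp (fun h => hss h) (fun h => hss h), h3⟩

theorem Rep.wordLength_le {S : Set G} {n : ℕ} {a : G} (ha : Rep S n a) :
    wordLength S a ≤ n := by
  obtain ⟨l, h1, h2, h3⟩ := ha
  exact le_trans (Nat.sInf_le ⟨l, rfl, h2, h3⟩) h1

theorem exists_list_of_mem_closure {S : Set G} {a : G} (ha : a ∈ Subgroup.closure S) :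
    ∃ l : List G, (∀ x ∈ l, x ∈ S ∨ x⁻¹ ∈ S) ∧ l.prod = a := by
  induction ha using Subgroup.closure_induction with
  | mem x hx => exact ⟨[x], by simp [hx], by simp⟩
  | one => exact ⟨[], by simp, rfl⟩
  | mul x y hx hy ihx ihy =>
    obtain ⟨l1, h1, h2⟩ := ihx
    obtain ⟨l2, h3, h4⟩ := ihy
    refine ⟨l1 ++ l2, ?_, by simp [h2, h4]⟩
    intro z hz
    rcases List.mem_append.1 hz with h | h
    · exact h1 z h
    · exact h3 z h
  | inv x hx ihx =>
    obtain ⟨l, h1, h2⟩ := ihx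
    have : Rep S l.length x⁻¹ := Rep.inv ⟨l, le_rfl, h1, h2⟩
    obtain ⟨l', _, h4, h5⟩ := this
    exact ⟨l', h4, h5⟩

theorem rep_of_wordLength_le {S : Set G} {a : G} (hcl : a ∈ Subgroup.closure S) {n : ℕ}
    (h : wordLength S a ≤ n) : Rep S n a := by
  obtain ⟨l, h1, h2⟩ := exists_list_of_mem_closure hcl
  have hne : {m | ∃ l : List G, l.length = m ∧ (∀ x ∈ l, x ∈ S ∨ x⁻¹ ∈ S) ∧ l.prod = a}.Nonempty :=
    ⟨l.length, l, rfl, h1, h2⟩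
  obtain ⟨l', hl1, hl2, hl3⟩ := Nat.sInf_mem hne
  exact ⟨l', hl1.le.trans h, hl2, hl3⟩

theorem rep_map {G' : Type*} [Group G'] {S₁ : Set G} {S₂ : Set G'} (f : G → G')
    (hmul : ∀ a b, f (a * b) = f a * f b) (hinv : ∀ a, f a⁻¹ = (f a)⁻¹) (hone : f 1 = 1)
    {c : ℕ} (hbase : ∀ x, (x ∈ S₁ ∨ x⁻¹ ∈ S₁) → Rep S₂ c (f x)) {n : ℕ} {a : G}
    (ha : Rep S₁ n a) : Rep S₂ (n * c) (f a) := by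
  obtain ⟨l, h1, h2, rfl⟩ := ha
  have key : ∀ l : List G, (∀ x ∈ l, x ∈ S₁ ∨ x⁻¹ ∈ S₁) → Rep S₂ (l.length * c) (f l.prod) := by
    intro l
    induction l with
    | nil => intro _; simpa [hone] using rep_one S₂ 0
    | cons x t ih =>
      intro hmem
      have hx := hbase x (hmem x (by simp))
      have ht := ih (fun y hy => hmem y (by simp [hy]))
      have : Rep S₂ (c + t.length * c) (f x * f t.prod) := hx.mul ht
      rw [List.prod_cons, hmul]
      exact this.mono (by simp [Nat.succ_mul]; omega)
  exact (key l h2).mono (Nat.mul_le_mul_right c h1)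

theorem rep_lift {G' : Type*} [Group G'] (f : G → G')
    (hmul : ∀ a b, f (a * b) = f a * f b) (hinv : ∀ a, f a⁻¹ = (f a)⁻¹) (hone : f 1 = 1)
    {k : ℕ} {g : Fin k → G} {n : ℕ} {x : G'}
    (hx : Rep (f '' Set.range g) n x) : ∃ w : G, Rep (Set.range g) n w ∧ f w = x := by
  obtain ⟨l, h1, h2, rfl⟩ := hx
  have key : ∀ l : List G', (∀ y ∈ l, y ∈ f '' Set.range g ∨ y⁻¹ ∈ f '' Set.range g) →
      ∃ w : G, Rep (Set.range g) l.length w ∧ f w = l.prod := by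
    intro l
    induction l with
    | nil => intro _; exact ⟨1, rep_one _ _, by simp [hone]⟩
    | cons y t ih =>
      intro hmem
      obtain ⟨w, hw, hfw⟩ := ih (fun z hz => hmem z (by simp [hz]))
      rcases hmem y (by simp) with ⟨x0, hx0, hfx0⟩ | ⟨x0, hx0, hfx0⟩
      · refine ⟨x0 * w, ?_, by simp [hmul, hfx0, hfw]⟩
        exact ((rep_of_mem hx0).mul hw).mono (by simp only [List.length_cons]; omega)
      · refine ⟨x0⁻¹ * w, ?_, ?_⟩
        · have hmem1 : ∀ z ∈ [x0⁻¹], z ∈ Set.range g ∨ z⁻¹ ∈ Set.range g := by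
            intro z hz
            simp only [List.mem_singleton] at hz
            subst hz
            exact Or.inr (by simpa using hx0)
          have h1 : Rep (Set.range g) 1 x0⁻¹ := ⟨[x0⁻¹], by simp, hmem1, by simp⟩
          exact (h1.mul hw).mono (by simp only [List.length_cons]; omega)
        · rw [hmul, hinv, hfx0]
          simp [hfw]
  obtain ⟨w, hw, hfw⟩ := key l h2
  exact ⟨w, hw.mono h1, hfw⟩

/-- The recursive bound sequence. -/
def aseq (c K : ℕ) (B : ℕ → ℕ) (N : ℕ) : ℕ → ℕ
  | 0 => 1
  | m + 1 => c * aseq c K B N m + K * B (N * m)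

theorem wordLength_one (S : Set G) : wordLength S 1 = 0 :=
  Nat.le_zero.mp (Rep.wordLength_le (rep_one S 0))

theorem eq_one_of_rep_zero {S : Set G} {a : G} (h : Rep S 0 a) : a = 1 := by
  obtain ⟨l, h1, _, h3⟩ := h
  rw [List.length_eq_zero_iff.mp (Nat.le_zero.mp h1)] at h3
  simpa using h3.symm

open Filter in
theorem eventually_le_pow {X : ℕ → ℕ} {LX ρ : ℝ}
    (h : Tendsto (fun m : ℕ => ((X m : ℕ) : ℝ) ^ (1 / (m : ℝ))) atTop (nhds LX))
    (hρ : LX < ρ) : ∃ j₀ : ℕ, ∀ j, j₀ ≤ j → (X j : ℝ) ≤ ρ ^ j := by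
  have hev : ∀ᶠ m in atTop, ((X m : ℕ) : ℝ) ^ (1 / (m : ℝ)) < ρ := h.eventually_lt_const hρ
  rw [eventually_atTop] at hev
  obtain ⟨j₀, hj₀⟩ := hev
  refine ⟨max j₀ 1, fun j hj => ?_⟩
  have hj1 : 1 ≤ j := le_trans (le_max_right _ _) hj
  have h1 := hj₀ j (le_trans (le_max_left _ _) hj)
  have hXj : (X j : ℝ) = (((X j : ℝ)) ^ (1 / (j : ℝ))) ^ j := by
    rw [one_div, Real.rpow_inv_natCast_pow (by positivity) (by omega)]
  rw [hXj]
  exact pow_le_pow_left₀ (Real.rpow_nonneg (by positivity) _) h1.le j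

end GRaux
set_option maxHeartbeats 2000000 in
theorem growth_rate_le_max_sub_quot {G : Type*} [Group G] [DecidableEq G]
    (H : Subgroup G) [H.Normal]
    (T : Finset G) (hT : Subgroup.closure (T : Set G) = H)
    (k : ℕ) (g : Fin k → G)
    (hQ : Subgroup.closure ((QuotientGroup.mk : G → G ⧸ H) '' Set.range g) = ⊤)
    (S : Finset G) (hSdef : S = T ∪ Finset.image g Finset.univ)
    (hS : Subgroup.closure (S : Set G) = ⊤)
    (α : G →* G) (hα : ∀ h ∈ H, α h ∈ H)
    (αbar : G ⧸ H →* G ⧸ H)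
    (hbar : ∀ x : G, αbar (QuotientGroup.mk x) = QuotientGroup.mk (α x))
    (L LH LQ : ℝ)
    (hL : Tendsto
      (fun m : ℕ =>
        ((S.sup fun s => wordLength (S : Set G) ((⇑α)^[m] s) : ℕ) : ℝ) ^ (1 / (m : ℝ)))
      atTop (nhds L))
    (hLH : Tendsto
      (fun m : ℕ =>
        ((T.sup fun t => wordLength (T : Set G) ((⇑α)^[m] t) : ℕ) : ℝ) ^ (1 / (m : ℝ)))
      atTop (nhds LH))
    (hLQ : Tendsto
      (fun m : ℕ =>
        (((Finset.image g Finset.univ).sup fun x =>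
            wordLength ((QuotientGroup.mk : G → G ⧸ H) '' Set.range g)
              ((⇑αbar)^[m] (QuotientGroup.mk x)) : ℕ) : ℝ) ^ (1 / (m : ℝ)))
      atTop (nhds LQ)) :
    L ≤ max LH LQ := by
  classical
  open GRaux in
  -- abbreviations
  set qs : Set (G ⧸ H) := (QuotientGroup.mk : G → G ⧸ H) '' Set.range g with hqs
  set Bf : ℕ → ℕ := fun j => T.sup fun t => wordLength (T : Set G) ((⇑α)^[j] t) with hBf
  set Cf : ℕ → ℕ := fun j => (Finset.image g Finset.univ).sup fun x =>
      wordLength qs ((⇑αbar)^[j] (QuotientGroup.mk x)) with hCf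
  set Af : ℕ → ℕ := fun j => S.sup fun s => wordLength (S : Set G) ((⇑α)^[j] s) with hAf
  have hHiter : ∀ j, ∀ x ∈ H, (⇑α)^[j] x ∈ H := by
    intro j
    induction j with
    | zero => intro x hx; simpa using hx
    | succ j ih => intro x hx; rw [Function.iterate_succ_apply]; exact ih _ (hα x hx)
  have hbariter : ∀ (j : ℕ) (x : G),
      (⇑αbar)^[j] (QuotientGroup.mk x) = QuotientGroup.mk ((⇑α)^[j] x) := by
    intro j
    induction j with
    | zero => intro x; rfl
    | succ j ih =>
      intro x
      rw [Function.iterate_succ_apply, Function.iterate_succ_apply, hbar, ih]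
  have hTH : ∀ t ∈ T, t ∈ H := fun t ht => hT ▸ Subgroup.subset_closure ht
  have hTS : (T : Set G) ⊆ (S : Set G) := by
    intro x hx
    simp only [hSdef, Finset.coe_union, Set.mem_union]
    exact Or.inl hx
  have hgmemS : ∀ i, g i ∈ S := by
    intro i
    rw [hSdef]
    exact Finset.mem_union_right _ (Finset.mem_image_of_mem g (Finset.mem_univ i))
  have repB : ∀ (j : ℕ) (t : G), t ∈ T → Rep (T : Set G) (Bf j) ((⇑α)^[j] t) := by
    intro j t ht
    have hmem : (⇑α)^[j] t ∈ Subgroup.closure (T : Set G) := by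
      rw [hT]; exact hHiter j t (hTH t ht)
    refine rep_of_wordLength_le hmem ?_
    simp only [hBf]
    exact Finset.le_sup (f := fun t => wordLength (T : Set G) ((⇑α)^[j] t)) ht
  have repBletter : ∀ (j : ℕ) (x : G), (x ∈ (T : Set G) ∨ x⁻¹ ∈ (T : Set G)) →
      Rep (T : Set G) (Bf j) ((⇑α)^[j] x) := by
    intro j x hx
    rcases hx with hx | hx
    · exact repB j x hx
    · have h1 := (repB j x⁻¹ hx).inv
      rwa [iterate_map_inv, inv_inv] at h1
  have repC : ∀ (j : ℕ) (i : Fin k),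
      Rep qs (Cf j) ((⇑αbar)^[j] (QuotientGroup.mk (g i))) := by
    intro j i
    have hmem : (⇑αbar)^[j] (QuotientGroup.mk (g i)) ∈ Subgroup.closure qs := by
      rw [hqs, hQ]; exact Subgroup.mem_top _
    refine rep_of_wordLength_le hmem ?_
    simp only [hCf]
    exact Finset.le_sup (f := fun x => wordLength qs ((⇑αbar)^[j] (QuotientGroup.mk x)))
      (Finset.mem_image_of_mem g (Finset.mem_univ i))
  rcases le_or_gt 1 (max LH LQ) with hcase | hcase
  · -- main case
    refine le_of_forall_pos_le_add ?_
    intro ε hε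
    set ρ : ℝ := max LH LQ + ε with hρdef
    have hρ1 : (1 : ℝ) ≤ ρ := by rw [hρdef]; linarith
    have hρ0 : (0 : ℝ) ≤ ρ := by linarith
    have hmaxρ : max LH LQ < ρ := by rw [hρdef]; linarith
    obtain ⟨jH, hjH⟩ := eventually_le_pow hLH (lt_of_le_of_lt (le_max_left LH LQ) hmaxρ)
    obtain ⟨jQ, hjQ⟩ := eventually_le_pow hLQ (lt_of_le_of_lt (le_max_right LH LQ) hmaxρ)
    set N : ℕ := max (max jH jQ) 1 with hNdef
    have hN1 : 1 ≤ N := le_max_right _ _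
    have hNH : jH ≤ N := le_trans (le_max_left _ _) (le_max_left _ _)
    have hNQ : jQ ≤ N := le_trans (le_max_right _ _) (le_max_left _ _)
    -- decomposition of α^N (g i)
    have decomp : ∀ i : Fin k, ∃ u v : G, (⇑α)^[N] (g i) = u * v ∧
        Rep (Set.range g) (Cf N) u ∧ ∃ κ : ℕ, Rep (T : Set G) κ v := by
      intro i
      have h1 := repC N i
      rw [hbariter] at h1
      obtain ⟨u, hu, hfu⟩ := rep_lift (QuotientGroup.mk : G → G ⧸ H)
        (fun a b => rfl) (fun a => rfl) rfl h1
      refine ⟨u, u⁻¹ * (⇑α)^[N] (g i), by group, hu, ?_⟩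
      have hmemH : u⁻¹ * (⇑α)^[N] (g i) ∈ H := by
        rw [← QuotientGroup.eq_one_iff]
        rw [QuotientGroup.mk_mul]
        simp [hfu]
      obtain ⟨l, hl1, hl2⟩ := exists_list_of_mem_closure (hT ▸ hmemH)
      exact ⟨l.length, l, le_rfl, hl1, hl2⟩
    choose u v hdec hu κ hκ using decomp
    set K : ℕ := Finset.univ.sup κ with hK
    have hvK : ∀ i, Rep (T : Set G) K (v i) :=
      fun i => (hκ i).mono (Finset.le_sup (Finset.mem_univ i))
    -- the main induction
    have key : ∀ (m : ℕ) (i : Fin k),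
        Rep (S : Set G) (aseq (Cf N) K Bf N m) ((⇑α)^[N * m] (g i)) := by
      intro m
      induction m with
      | zero =>
        intro i
        have h1 : Rep (S : Set G) 1 (g i) := rep_of_mem (hgmemS i)
        simpa [aseq] using h1
      | succ m ih =>
        intro i
        have e : (⇑α)^[N * (m + 1)] (g i) = (⇑α)^[N * m] ((⇑α)^[N] (g i)) := by
          rw [← Function.iterate_add_apply, Nat.mul_succ]
        rw [e, hdec i, iterate_map_mul]
        have p1 : Rep (S : Set G) (Cf N * aseq (Cf N) K Bf N m) ((⇑α)^[N * m] (u i)) := by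
          refine rep_map _ (fun a b => iterate_map_mul α _ a b)
            (fun a => iterate_map_inv α _ a) (iterate_map_one α _) ?_ (hu i)
          intro x hx
          rcases hx with ⟨j, rfl⟩ | ⟨j, hj⟩
          · exact ih j
          · have hx' : x = (g j)⁻¹ := by rw [hj]; simp
            rw [hx', iterate_map_inv]
            exact (ih j).inv
        have p2 : Rep (S : Set G) (K * Bf (N * m)) ((⇑α)^[N * m] (v i)) := by
          refine Rep.subset hTS ?_
          exact rep_map _ (fun a b => iterate_map_mul α _ a b)
            (fun a => iterate_map_inv α _ a) (iterate_map_one α _)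
            (repBletter (N * m)) (hvK i)
        simpa [aseq] using p1.mul p2
    -- real bound on aseq
    set D : ℝ := (K : ℝ) * ((Bf 0 : ℝ) + 1) with hD
    have hD0 : 0 ≤ D := by positivity
    have hCNρ : (Cf N : ℝ) ≤ ρ ^ N := hjQ N hNQ
    have hBρ : ∀ j, jH ≤ j → (Bf j : ℝ) ≤ ρ ^ j := hjH
    have habound : ∀ m : ℕ, (aseq (Cf N) K Bf N m : ℝ) ≤ (1 + D * m) * ρ ^ (N * m) := by
      intro m
      induction m with
      | zero => simp [aseq]
      | succ m ih =>
        have hpownn : (0 : ℝ) ≤ ρ ^ (N * m) := pow_nonneg hρ0 _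
        have hpownn1 : (0 : ℝ) ≤ ρ ^ (N * (m + 1)) := pow_nonneg hρ0 _
        have hKB : (K : ℝ) * (Bf (N * m) : ℝ) ≤ D * ρ ^ (N * (m + 1)) := by
          rcases Nat.eq_zero_or_pos m with rfl | hm
          · have h1 : (1 : ℝ) ≤ ρ ^ (N * (0 + 1)) := one_le_pow₀ hρ1
            have h2 : (Bf (N * 0) : ℝ) ≤ (Bf 0 : ℝ) + 1 := by norm_num
            have h3 : (0 : ℝ) ≤ (K : ℝ) := Nat.cast_nonneg _
            nlinarith [mul_le_mul_of_nonneg_left h2 h3]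
          · have h2 := hBρ (N * m) (le_trans hNH (Nat.le_mul_of_pos_right N hm))
            have h3 : ρ ^ (N * m) ≤ ρ ^ (N * (m + 1)) :=
              pow_le_pow_right₀ hρ1 (Nat.mul_le_mul_left N (by omega))
            have hK0 : (0 : ℝ) ≤ (K : ℝ) := Nat.cast_nonneg _
            have hB00 : (0 : ℝ) ≤ ((Bf 0 : ℕ) : ℝ) := Nat.cast_nonneg _
            have h4 : (K : ℝ) ≤ D := by
              rw [hD]
              nlinarith [hK0, hB00]
            have h5 : (0 : ℝ) ≤ (K : ℝ) := Nat.cast_nonneg _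
            have h6 : (0 : ℝ) ≤ (Bf (N * m) : ℝ) := Nat.cast_nonneg _
            nlinarith
        have step : (aseq (Cf N) K Bf N (m + 1) : ℝ)
            = (Cf N : ℝ) * (aseq (Cf N) K Bf N m : ℝ) + (K : ℝ) * (Bf (N * m) : ℝ) := by
          show ((Cf N * aseq (Cf N) K Bf N m + K * Bf (N * m) : ℕ) : ℝ) = _
          push_cast
          ring
        have h7 : (Cf N : ℝ) * (aseq (Cf N) K Bf N m : ℝ) ≤ ρ ^ N * ((1 + D * m) * ρ ^ (N * m)) := by
          have := mul_le_mul hCNρ ih (Nat.cast_nonneg _) (pow_nonneg hρ0 _)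
          linarith
        have h8 : ρ ^ N * ((1 + D * m) * ρ ^ (N * m)) = (1 + D * m) * ρ ^ (N * (m + 1)) := by
          rw [show N * (m + 1) = N + N * m by ring, pow_add]
          ring
        rw [h8] at h7
        rw [step]
        push_cast
        linarith [h7, hKB]
    -- bound on the full sup, for m ≥ 1
    have hAle : ∀ m : ℕ, 1 ≤ m → ((Af (N * m) : ℕ) : ℝ) ≤ (1 + D * m) * ρ ^ (N * m) := by
      intro m hm
      have hsup : Af (N * m) ≤ max (aseq (Cf N) K Bf N m) (Bf (N * m)) := by
        refine Finset.sup_le ?_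
        intro s hs
        rw [hSdef] at hs
        rcases Finset.mem_union.1 hs with hs | hs
        · exact le_max_of_le_right (Rep.wordLength_le (Rep.subset hTS (repB (N * m) s hs)))
        · obtain ⟨i, _, rfl⟩ := Finset.mem_image.1 hs
          exact le_max_of_le_left (Rep.wordLength_le (key m i))
      have h1 : ((Af (N * m) : ℕ) : ℝ) ≤ max ((aseq (Cf N) K Bf N m : ℕ) : ℝ) ((Bf (N * m) : ℕ) : ℝ) := by
        rw [← Nat.cast_max]
        exact_mod_cast hsup
      have h2 : ((Bf (N * m) : ℕ) : ℝ) ≤ (1 + D * m) * ρ ^ (N * m) := by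
        have hb := hBρ (N * m) (le_trans hNH (Nat.le_mul_of_pos_right N (by omega)))
        have hp : (0 : ℝ) ≤ D * (m : ℝ) * ρ ^ (N * m) := by positivity
        nlinarith [hp, hb]
      exact le_trans h1 (max_le (habound m) h2)
    -- limit arguments
    have hNtend : Filter.Tendsto (fun m : ℕ => N * m) atTop atTop := by
      apply Filter.tendsto_atTop_atTop.mpr
      intro b
      exact ⟨b, fun m hm => le_trans hm (Nat.le_mul_of_pos_left m (by omega))⟩
    have seq1 := hL.comp hNtend
    have seq2 : Filter.Tendsto
        (fun m : ℕ => ((Af (N * m) : ℕ) : ℝ) ^ (1 / (m : ℝ))) atTop (nhds (L ^ N)) := by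
      have h3 := seq1.pow N
      refine h3.congr ?_
      intro m
      simp only [Function.comp_apply]
      rw [← Real.rpow_natCast ((((Af (N * m) : ℕ) : ℝ)) ^ (1 / ((N * m : ℕ) : ℝ))) N,
        ← Real.rpow_mul (by positivity)]
      congr 1
      rcases Nat.eq_zero_or_pos m with rfl | hm
      · simp
      · have hm0 : ((m : ℕ) : ℝ) ≠ 0 := by positivity
        have hN0 : ((N : ℕ) : ℝ) ≠ 0 := by positivity
        push_cast
        field_simp
    have hmon : Filter.Tendsto (fun m : ℕ => ((m : ℝ)) ^ (1 / (m : ℝ))) atTop (nhds 1) :=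
      tendsto_rpow_div.comp tendsto_natCast_atTop_atTop
    have honebound : Filter.Tendsto
        (fun m : ℕ => (1 + D * (m : ℝ)) ^ (1 / (m : ℝ))) atTop (nhds 1) := by
      have hupper := hmon.pow 2
      rw [one_pow] at hupper
      apply tendsto_of_tendsto_of_tendsto_of_le_of_le' tendsto_const_nhds hupper
      · filter_upwards [Filter.eventually_ge_atTop 1] with m hm
        have hm1 : (1 : ℝ) ≤ (m : ℝ) := by exact_mod_cast hm
        exact Real.one_le_rpow (by nlinarith) (by positivity)
      · filter_upwards [Filter.eventually_ge_atTop (max 2 ⌈D + 1⌉₊)] with m hm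
        have hm2 : (2 : ℝ) ≤ (m : ℝ) := by
          have := le_trans (le_max_left 2 ⌈D + 1⌉₊) hm
          exact_mod_cast this
        have hmD : D + 1 ≤ (m : ℝ) := by
          have h1 := le_trans (le_max_right 2 ⌈D + 1⌉₊) hm
          exact le_trans (Nat.le_ceil _) (by exact_mod_cast h1)
        have hbase : 1 + D * (m : ℝ) ≤ ((m : ℝ)) ^ (2 : ℕ) := by nlinarith
        calc (1 + D * (m : ℝ)) ^ (1 / (m : ℝ))
            ≤ (((m : ℝ)) ^ (2 : ℕ)) ^ (1 / (m : ℝ)) :=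
              Real.rpow_le_rpow (by positivity) hbase (by positivity)
          _ = (((m : ℝ)) ^ (1 / (m : ℝ))) ^ (2 : ℕ) := by
              rw [← Real.rpow_natCast ((m : ℝ)) 2, ← Real.rpow_mul (Nat.cast_nonneg m),
                mul_comm, Real.rpow_mul (Nat.cast_nonneg m), Real.rpow_natCast]
    have hupperlim : Filter.Tendsto
        (fun m : ℕ => (1 + D * (m : ℝ)) ^ (1 / (m : ℝ)) * ρ ^ N) atTop (nhds (1 * ρ ^ N)) :=
      honebound.mul_const _
    have hfinal : L ^ N ≤ 1 * ρ ^ N := by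
      refine le_of_tendsto_of_tendsto seq2 hupperlim ?_
      filter_upwards [Filter.eventually_ge_atTop 1] with m hm
      have h1 := hAle m hm
      calc ((Af (N * m) : ℕ) : ℝ) ^ (1 / (m : ℝ))
          ≤ ((1 + D * (m : ℝ)) * ρ ^ (N * m)) ^ (1 / (m : ℝ)) :=
            Real.rpow_le_rpow (by positivity) h1 (by positivity)
        _ = (1 + D * (m : ℝ)) ^ (1 / (m : ℝ)) * (ρ ^ (N * m)) ^ (1 / (m : ℝ)) :=
            Real.mul_rpow (by positivity) (by positivity)
        _ = (1 + D * (m : ℝ)) ^ (1 / (m : ℝ)) * ρ ^ N := by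
            rw [pow_mul, one_div, Real.pow_rpow_inv_natCast (pow_nonneg hρ0 N) (by omega)]
    rw [one_mul] at hfinal
    by_contra hcon
    push_neg at hcon
    have h2 : ρ ^ N < L ^ N := pow_lt_pow_left₀ hcon hρ0 (by omega)
    linarith
  · -- degenerate case : max LH LQ < 1
    have hLH1 : LH < 1 := lt_of_le_of_lt (le_max_left _ _) hcase
    have hLQ1 : LQ < 1 := lt_of_le_of_lt (le_max_right _ _) hcase
    obtain ⟨m, ⟨⟨hBm, hCm⟩, hm1⟩⟩ :=
      (((hLH.eventually_lt_const hLH1).and (hLQ.eventually_lt_const hLQ1)).and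
        (Filter.eventually_ge_atTop 1)).exists
    have hB0 : Bf m = 0 := by
      by_contra h
      have h1 : (1 : ℝ) ≤ ((Bf m : ℕ) : ℝ) := by exact_mod_cast Nat.one_le_iff_ne_zero.mpr h
      have h2 := Real.one_le_rpow h1 (by positivity : (0 : ℝ) ≤ 1 / (m : ℝ))
      linarith
    have hC0 : Cf m = 0 := by
      by_contra h
      have h1 : (1 : ℝ) ≤ ((Cf m : ℕ) : ℝ) := by exact_mod_cast Nat.one_le_iff_ne_zero.mpr h
      have h2 := Real.one_le_rpow h1 (by positivity : (0 : ℝ) ≤ 1 / (m : ℝ))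
      linarith
    have hkillT : ∀ t ∈ T, (⇑α)^[m] t = 1 := by
      intro t ht
      have h0 : wordLength (T : Set G) ((⇑α)^[m] t) ≤ Bf m := by
        simp only [hBf]
        exact Finset.le_sup (f := fun t => wordLength (T : Set G) ((⇑α)^[m] t)) ht
      have h1 : wordLength (T : Set G) ((⇑α)^[m] t) = 0 := Nat.le_zero.mp (hB0 ▸ h0)
      have hmem : (⇑α)^[m] t ∈ Subgroup.closure (T : Set G) := by
        rw [hT]; exact hHiter m t (hTH t ht)
      exact eq_one_of_rep_zero (rep_of_wordLength_le hmem (le_of_eq h1))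
    have hginH : ∀ i, (⇑α)^[m] (g i) ∈ H := by
      intro i
      have h0 : wordLength qs ((⇑αbar)^[m] (QuotientGroup.mk (g i))) ≤ Cf m := by
        simp only [hCf]
        exact Finset.le_sup (f := fun x => wordLength qs ((⇑αbar)^[m] (QuotientGroup.mk x)))
          (Finset.mem_image_of_mem g (Finset.mem_univ i))
      have h1 : wordLength qs ((⇑αbar)^[m] (QuotientGroup.mk (g i))) = 0 := Nat.le_zero.mp (hC0 ▸ h0)
      have hmem : (⇑αbar)^[m] (QuotientGroup.mk (g i)) ∈ Subgroup.closure qs := by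
        rw [hqs, hQ]; exact Subgroup.mem_top _
      have h3 := eq_one_of_rep_zero (rep_of_wordLength_le hmem (le_of_eq h1))
      rw [hbariter] at h3
      exact (QuotientGroup.eq_one_iff _).mp h3
    have hkillH : ∀ x ∈ H, (⇑α)^[m] x = 1 := by
      intro x hx
      rw [← hT] at hx
      induction hx using Subgroup.closure_induction with
      | mem t ht => exact hkillT t ht
      | one => exact iterate_map_one α m
      | mul a b _ _ iha ihb => rw [iterate_map_mul, iha, ihb, one_mul]
      | inv a _ iha => rw [iterate_map_inv, iha, inv_one]
    have hkillS : ∀ s ∈ S, (⇑α)^[2 * m] s = 1 := by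
      intro s hs
      have e : (⇑α)^[2 * m] s = (⇑α)^[m] ((⇑α)^[m] s) := by
        rw [← Function.iterate_add_apply, two_mul]
      rw [hSdef] at hs
      rcases Finset.mem_union.1 hs with hs | hs
      · rw [e, hkillT s hs, iterate_map_one]
      · obtain ⟨i, _, rfl⟩ := Finset.mem_image.1 hs
        rw [e]
        exact hkillH _ (hginH i)
    have hAev : ∀ j, 2 * m ≤ j → Af j = 0 := by
      intro j hj
      refine Nat.le_zero.mp (Finset.sup_le ?_)
      intro s hs
      have e : (⇑α)^[j] s = (⇑α)^[j - 2 * m] ((⇑α)^[2 * m] s) := by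
        rw [← Function.iterate_add_apply]
        congr 1
        omega
      rw [e, hkillS s hs, iterate_map_one, wordLength_one]
    have hzero : Filter.Tendsto
        (fun j : ℕ => ((Af j : ℕ) : ℝ) ^ (1 / (j : ℝ))) atTop (nhds 0) := by
      refine Filter.Tendsto.congr' ?_ tendsto_const_nhds
      filter_upwards [Filter.eventually_ge_atTop (max (2 * m) 1)] with j hj
      have h1 : Af j = 0 := hAev j (le_trans (le_max_left _ _) hj)
      have hj1 : 1 ≤ j := le_trans (le_max_right _ _) hj
      rw [h1]
      rw [Nat.cast_zero, Real.zero_rpow (by positivity)]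
    have hL0 : L = 0 := tendsto_nhds_unique hL hzero
    have hLHnn : (0 : ℝ) ≤ LH := by
      refine le_of_tendsto_of_tendsto tendsto_const_nhds hLH ?_
      filter_upwards with j
      positivity
    rw [hL0]
    exact le_max_of_le_left hLHnn
end

section
/- Let A and B be finitely generated groups and Γ = A ∗ B their free product, with generating set the union of finite generating sets of A and B. If α is an endomorphism of Γ with α(A) ⊆ A and α(B) ⊆ B, then GR(α on Γ) = max{ GR(α restricted to A), GR(α restricted to B) }. -/
open Filter

lemma wordLength_le {G : Type*} [Group G] (S : Set G) (g : G) (l : List G)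
    (hmem : ∀ x ∈ l, x ∈ S ∨ x⁻¹ ∈ S) (hprod : l.prod = g) :
    wordLength S g ≤ l.length :=
  Nat.sInf_le ⟨l, rfl, hmem, hprod⟩

lemma exists_wordLength_word {G : Type*} [Group G] (S : Set G) (g : G)
    (h : ∃ l : List G, (∀ x ∈ l, x ∈ S ∨ x⁻¹ ∈ S) ∧ l.prod = g) :
    ∃ l : List G, l.length = wordLength S g ∧ (∀ x ∈ l, x ∈ S ∨ x⁻¹ ∈ S) ∧ l.prod = g := by
  obtain ⟨l, hmem, hprod⟩ := h
  have hne : {n | ∃ l : List G, l.length = n ∧ (∀ x ∈ l, x ∈ S ∨ x⁻¹ ∈ S) ∧ l.prod = g}.Nonempty :=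
    ⟨l.length, l, rfl, hmem, hprod⟩
  exact Nat.sInf_mem hne

/-- Drop the identity elements of a word. -/
lemma shorten_word {G : Type*} [Group G] (S : Set G) (l : List G)
    (h : ∀ x ∈ l, x ∈ S ∨ x⁻¹ ∈ S ∨ x = 1) :
    ∃ l₁ : List G, l₁.length ≤ l.length ∧ (∀ x ∈ l₁, x ∈ S ∨ x⁻¹ ∈ S) ∧ l₁.prod = l.prod := by
  induction l with
  | nil => exact ⟨[], le_refl _, by simp, rfl⟩
  | cons a t ih =>
    obtain ⟨l₁, hlen, hmem, hprod⟩ := ih (fun x hx => h x (List.mem_cons_of_mem a hx))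
    rcases h a (List.mem_cons_self) with ha | ha | ha
    · exact ⟨a :: l₁, by simpa using hlen, by
        intro x hx
        rcases List.mem_cons.mp hx with rfl | hx
        · exact Or.inl ha
        · exact hmem x hx, by simp [hprod]⟩
    · exact ⟨a :: l₁, by simpa using hlen, by
        intro x hx
        rcases List.mem_cons.mp hx with rfl | hx
        · exact Or.inr ha
        · exact hmem x hx, by simp [hprod]⟩
    · exact ⟨l₁, le_trans hlen (by simp), hmem, by simp [ha, hprod]⟩

/-- The generating set witness: every element is a product of generators. -/
lemma exists_word {G : Type*} [Group G] {S : Set G} (hS : Subgroup.closure S = ⊤) (g : G) :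
    ∃ l : List G, (∀ x ∈ l, x ∈ S ∨ x⁻¹ ∈ S) ∧ l.prod = g := by
  have hg : g ∈ Submonoid.closure (S ∪ S⁻¹) := by
    rw [← Subgroup.closure_toSubmonoid, hS]; trivial
  obtain ⟨l, hl, hprod⟩ := Submonoid.exists_list_of_mem_closure hg
  refine ⟨l, fun x hx => ?_, hprod⟩
  rcases hl x hx with h | h
  · exact Or.inl h
  · exact Or.inr (Set.mem_inv.mp h)

section Main

variable {A B : Type*} [Group A] [Group B]

lemma wordLength_inl (SA : Finset A) (SB : Finset B)
    (hSA : Subgroup.closure (SA : Set A) = ⊤) (a : A) :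
    wordLength ((Monoid.Coprod.inl '' (SA : Set A)) ∪ (Monoid.Coprod.inr '' (SB : Set B)))
      (Monoid.Coprod.inl a) = wordLength (SA : Set A) a := by
  set S : Set (Monoid.Coprod A B) :=
    (Monoid.Coprod.inl '' (SA : Set A)) ∪ (Monoid.Coprod.inr '' (SB : Set B)) with hSdef
  -- from an A-word get a coprod word of the same length
  have key : ∀ l : List A, (∀ x ∈ l, x ∈ (SA : Set A) ∨ x⁻¹ ∈ (SA : Set A)) →
      ∃ l' : List (Monoid.Coprod A B), l'.length = l.length ∧
        (∀ x ∈ l', x ∈ S ∨ x⁻¹ ∈ S) ∧ l'.prod = Monoid.Coprod.inl l.prod := by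
    intro l hl
    refine ⟨l.map Monoid.Coprod.inl, by simp, ?_, ?_⟩
    · intro x hx
      obtain ⟨y, hy, rfl⟩ := List.mem_map.mp hx
      rcases hl y hy with h | h
      · exact Or.inl (Or.inl ⟨y, h, rfl⟩)
      · exact Or.inr (Or.inl ⟨y⁻¹, h, by simp⟩)
    · rw [← map_list_prod]
  obtain ⟨l₀, hl₀, hp₀⟩ := exists_word hSA a
  apply le_antisymm
  · -- ≤ : take an optimal A-word and push it up
    obtain ⟨l, hlen, hmem, hprod⟩ := exists_wordLength_word (SA : Set A) a ⟨l₀, hl₀, hp₀⟩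
    obtain ⟨l', hlen', hmem', hprod'⟩ := key l hmem
    calc wordLength S (Monoid.Coprod.inl a)
        ≤ l'.length := wordLength_le _ _ _ hmem' (by rw [hprod', hprod])
      _ = _ := by rw [hlen', hlen]
  · -- ≥ : take an optimal coprod word and push it down via fst
    have hCex : ∃ l : List (Monoid.Coprod A B),
        (∀ x ∈ l, x ∈ S ∨ x⁻¹ ∈ S) ∧ l.prod = Monoid.Coprod.inl a := by
      obtain ⟨l', hlen', hmem', hprod'⟩ := key l₀ hl₀
      exact ⟨l', hmem', by rw [hprod', hp₀]⟩
    obtain ⟨l, hlen, hmem, hprod⟩ :=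
      exists_wordLength_word S (Monoid.Coprod.inl a) hCex
    have htri : ∀ x ∈ l.map Monoid.Coprod.fst,
        x ∈ (SA : Set A) ∨ x⁻¹ ∈ (SA : Set A) ∨ x = 1 := by
      intro x hx
      obtain ⟨y, hy, rfl⟩ := List.mem_map.mp hx
      rcases hmem y hy with h | h
      · rcases h with ⟨s, hs, rfl⟩ | ⟨t, ht, rfl⟩
        · exact Or.inl (by simpa using hs)
        · exact Or.inr (Or.inr (by simp))
      · rcases h with ⟨s, hs, hy'⟩ | ⟨t, ht, hy'⟩
        · refine Or.inr (Or.inl ?_)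
          have : (Monoid.Coprod.fst y)⁻¹ = s := by
            rw [← map_inv, ← hy', Monoid.Coprod.fst_apply_inl]
          rw [this]; exact hs
        · refine Or.inr (Or.inr ?_)
          have : (Monoid.Coprod.fst y)⁻¹ = 1 := by
            rw [← map_inv, ← hy', Monoid.Coprod.fst_apply_inr]
          simpa using this
    obtain ⟨l₁, hlen₁, hmem₁, hprod₁⟩ := shorten_word (SA : Set A) _ htri
    have hprod₁' : l₁.prod = a := by
      rw [hprod₁, ← map_list_prod, hprod, Monoid.Coprod.fst_apply_inl]
    calc wordLength (SA : Set A) a ≤ l₁.length := wordLength_le _ _ _ hmem₁ hprod₁'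
      _ ≤ (l.map Monoid.Coprod.fst).length := hlen₁
      _ = l.length := List.length_map _
      _ = _ := hlen

/-- `wordLength` is preserved by multiplicative equivalences. -/
lemma wordLength_equiv {G H : Type*} [Group G] [Group H] (e : G ≃* H) (S : Set G) (g : G) :
    wordLength (e '' S) (e g) = wordLength S g := by
  unfold wordLength
  congr 1
  ext n
  constructor
  · rintro ⟨l, hlen, hmem, hprod⟩
    refine ⟨l.map e.symm, by simp [hlen], ?_, ?_⟩
    · intro x hx
      obtain ⟨y, hy, rfl⟩ := List.mem_map.mp hx
      rcases hmem y hy with ⟨z, hz, hzy⟩ | ⟨z, hz, hzy⟩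
      · exact Or.inl (by rw [← hzy]; simpa using hz)
      · refine Or.inr ?_
        have : (e.symm y)⁻¹ = z := by
          apply e.injective
          rw [map_inv, MulEquiv.apply_symm_apply]
          exact hzy.symm
        rw [this]; exact hz
    · apply e.injective
      rw [map_list_prod, List.map_map]
      have h1 : (⇑e ∘ ⇑e.symm) = id := funext fun x => e.apply_symm_apply x
      rw [h1, List.map_id, hprod]
  · rintro ⟨l, hlen, hmem, hprod⟩
    refine ⟨l.map e, by simp [hlen], ?_, ?_⟩
    · intro x hx
      obtain ⟨y, hy, rfl⟩ := List.mem_map.mp hx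
      rcases hmem y hy with h | h
      · exact Or.inl ⟨y, h, rfl⟩
      · exact Or.inr ⟨y⁻¹, h, by simp⟩
    · rw [← map_list_prod, hprod]

lemma wordLength_inr (SA : Finset A) (SB : Finset B)
    (hSB : Subgroup.closure (SB : Set B) = ⊤) (b : B) :
    wordLength ((Monoid.Coprod.inl '' (SA : Set A)) ∪ (Monoid.Coprod.inr '' (SB : Set B)))
      (Monoid.Coprod.inr b) = wordLength (SB : Set B) b := by
  have base := wordLength_inl (A := B) (B := A) SB SA hSB b
  set e : Monoid.Coprod A B ≃* Monoid.Coprod B A := MulEquiv.coprodComm A B with he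
  have he_inl : ∀ x : A, e (Monoid.Coprod.inl x) = Monoid.Coprod.inr x := fun x => rfl
  have he_inr : ∀ x : B, e (Monoid.Coprod.inr x) = Monoid.Coprod.inl x := fun x => rfl
  have him : e '' ((Monoid.Coprod.inl '' (SA : Set A)) ∪ (Monoid.Coprod.inr '' (SB : Set B)))
      = (Monoid.Coprod.inl '' (SB : Set B)) ∪ (Monoid.Coprod.inr '' (SA : Set A)) := by
    rw [Set.image_union, ← Set.image_comp, ← Set.image_comp, Set.union_comm]
    rfl
  have key := wordLength_equiv e
      ((Monoid.Coprod.inl '' (SA : Set A)) ∪ (Monoid.Coprod.inr '' (SB : Set B)))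
      (Monoid.Coprod.inr b)
  rw [him, he_inr] at key
  rw [← key, base]

end Main

theorem growth_rate_free_product {A B : Type*} [Group A] [Group B]
    (SA : Finset A) (SB : Finset B)
    (hSA : Subgroup.closure (SA : Set A) = ⊤)
    (hSB : Subgroup.closure (SB : Set B) = ⊤)
    (α : Monoid.Coprod A B →* Monoid.Coprod A B) (αA : A →* A) (αB : B →* B)
    (hA : ∀ a : A, α (Monoid.Coprod.inl a) = Monoid.Coprod.inl (αA a))
    (hB : ∀ b : B, α (Monoid.Coprod.inr b) = Monoid.Coprod.inr (αB b))
    (L LA LB : ℝ)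
    (hL : Tendsto
      (fun m : ℕ =>
        ((max (SA.sup fun a =>
              wordLength ((Monoid.Coprod.inl '' (SA : Set A)) ∪ (Monoid.Coprod.inr '' (SB : Set B)))
                ((⇑α)^[m] (Monoid.Coprod.inl a)))
            (SB.sup fun b =>
              wordLength ((Monoid.Coprod.inl '' (SA : Set A)) ∪ (Monoid.Coprod.inr '' (SB : Set B)))
                ((⇑α)^[m] (Monoid.Coprod.inr b))) : ℕ) : ℝ) ^ (1 / (m : ℝ)))
      atTop (nhds L))
    (hLA : Tendsto
      (fun m : ℕ =>
        ((SA.sup fun a => wordLength (SA : Set A) ((⇑αA)^[m] a) : ℕ) : ℝ) ^ (1 / (m : ℝ)))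
      atTop (nhds LA))
    (hLB : Tendsto
      (fun m : ℕ =>
        ((SB.sup fun b => wordLength (SB : Set B) ((⇑αB)^[m] b) : ℕ) : ℝ) ^ (1 / (m : ℝ)))
      atTop (nhds LB)) :
    L = max LA LB := by
  have hiterA : ∀ (m : ℕ) (a : A),
      (⇑α)^[m] (Monoid.Coprod.inl a) = Monoid.Coprod.inl ((⇑αA)^[m] a) := by
    intro m
    induction m with
    | zero => simp
    | succ n ih =>
      intro a
      rw [Function.iterate_succ_apply, Function.iterate_succ_apply, hA, ih]
  have hiterB : ∀ (m : ℕ) (b : B),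
      (⇑α)^[m] (Monoid.Coprod.inr b) = Monoid.Coprod.inr ((⇑αB)^[m] b) := by
    intro m
    induction m with
    | zero => simp
    | succ n ih =>
      intro b
      rw [Function.iterate_succ_apply, Function.iterate_succ_apply, hB, ih]
  have hseq : ∀ m : ℕ,
      ((max (SA.sup fun a =>
            wordLength ((Monoid.Coprod.inl '' (SA : Set A)) ∪ (Monoid.Coprod.inr '' (SB : Set B)))
              ((⇑α)^[m] (Monoid.Coprod.inl a)))
          (SB.sup fun b =>
            wordLength ((Monoid.Coprod.inl '' (SA : Set A)) ∪ (Monoid.Coprod.inr '' (SB : Set B)))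
              ((⇑α)^[m] (Monoid.Coprod.inr b))) : ℕ) : ℝ) ^ (1 / (m : ℝ)) =
      max ((((SA.sup fun a => wordLength (SA : Set A) ((⇑αA)^[m] a)) : ℕ) : ℝ) ^ (1 / (m : ℝ)))
        ((((SB.sup fun b => wordLength (SB : Set B) ((⇑αB)^[m] b)) : ℕ) : ℝ) ^ (1 / (m : ℝ))) := by
    intro m
    have e1 : (SA.sup fun a =>
        wordLength ((Monoid.Coprod.inl '' (SA : Set A)) ∪ (Monoid.Coprod.inr '' (SB : Set B)))
          ((⇑α)^[m] (Monoid.Coprod.inl a))) =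
        SA.sup fun a => wordLength (SA : Set A) ((⇑αA)^[m] a) := by
      apply Finset.sup_congr rfl
      intro a _
      rw [hiterA m a, wordLength_inl SA SB hSA]
    have e2 : (SB.sup fun b =>
        wordLength ((Monoid.Coprod.inl '' (SA : Set A)) ∪ (Monoid.Coprod.inr '' (SB : Set B)))
          ((⇑α)^[m] (Monoid.Coprod.inr b))) =
        SB.sup fun b => wordLength (SB : Set B) ((⇑αB)^[m] b) := by
      apply Finset.sup_congr rfl
      intro b _
      rw [hiterB m b, wordLength_inr SA SB hSB]
    rw [e1, e2]
    set p := (SA.sup fun a => wordLength (SA : Set A) ((⇑αA)^[m] a))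
    set q := (SB.sup fun b => wordLength (SB : Set B) ((⇑αB)^[m] b))
    have hc : (0 : ℝ) ≤ 1 / (m : ℝ) := by positivity
    rcases le_total p q with h | h
    · rw [max_eq_right h, max_eq_right
        (Real.rpow_le_rpow (by positivity) (by exact_mod_cast h) hc)]
    · rw [max_eq_left h, max_eq_left
        (Real.rpow_le_rpow (by positivity) (by exact_mod_cast h) hc)]
  have hL' : Tendsto
      (fun m : ℕ =>
        max ((((SA.sup fun a => wordLength (SA : Set A) ((⇑αA)^[m] a)) : ℕ) : ℝ) ^ (1 / (m : ℝ)))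
          ((((SB.sup fun b => wordLength (SB : Set B) ((⇑αB)^[m] b)) : ℕ) : ℝ) ^ (1 / (m : ℝ))))
      atTop (nhds L) := by
    apply hL.congr
    intro m
    exact hseq m
  exact tendsto_nhds_unique hL' (hLA.max hLB)
end
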